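/- Let k be a field of characteristic p ≠ 0, R = k[π] a polynomial ring in one variable, m a positive integer, and f(X,Y) ∈ k[X,Y] such that k[X,Y]/(f) ≅ k[1] (a polynomial ring in one variable) but k[X,Y] is not a polynomial ring in one variable over k[f]. Set A = R[X,Y,Z]/(πᵐZ − f(X,Y)). Then A ⊗_R k(P) ≅ k(P)[2] for every prime ideal P of R. -/

import Mathlib

open MvPolynomial

lemma lemA {F : Type*} [Field F] (c : F) (hc : c ≠ 0) (g : MvPolynomial (Fin 2) F) :
    Nonempty ((MvPolynomial (Fin 3) F ⧸
        Ideal.span {(C c * X 2 - rename Fin.castSucc g : MvPolynomial (Fin 3) F)})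
      ≃ₐ[F] MvPolynomial (Fin 2) F) := by
  set t : MvPolynomial (Fin 3) F := C c * X 2 - rename Fin.castSucc g with ht
  set I : Ideal (MvPolynomial (Fin 3) F) := Ideal.span {t} with hI
  have h2 : (2 : Fin 3) = Fin.last 2 := rfl
  set φ : MvPolynomial (Fin 3) F →ₐ[F] MvPolynomial (Fin 2) F :=
    aeval (Fin.snoc (fun i : Fin 2 => X i) (c⁻¹ • g)) with hφ
  have hrg : φ (rename Fin.castSucc g) = g := by
    rw [hφ, aeval_rename]
    have : (Fin.snoc (fun i : Fin 2 => X i) (c⁻¹ • g) ∘ Fin.castSucc : Fin 2 → _) =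
        fun i : Fin 2 => (X i : MvPolynomial (Fin 2) F) := by
      funext i; simp [Fin.snoc_castSucc]
    rw [this]
    exact aeval_X_left_apply g
  have hφt : φ t = 0 := by
    rw [ht, map_sub, map_mul, hrg, algHom_C, h2]
    simp only [hφ, aeval_X, Fin.snoc_last]
    rw [Algebra.smul_def]
    simp only [algebraMap_eq]
    rw [← mul_assoc, ← C_mul, mul_inv_cancel₀ hc, C_1, one_mul, sub_self]
  have hker : ∀ a ∈ I, φ a = 0 := by
    intro a ha
    obtain ⟨d, rfl⟩ := Ideal.mem_span_singleton.mp ha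
    rw [map_mul, hφt, zero_mul]
  set ψ : (MvPolynomial (Fin 3) F ⧸ I) →ₐ[F] MvPolynomial (Fin 2) F :=
    Ideal.Quotient.liftₐ I φ hker with hψ
  set ι : MvPolynomial (Fin 2) F →ₐ[F] (MvPolynomial (Fin 3) F ⧸ I) :=
    aeval (fun i : Fin 2 => Ideal.Quotient.mkₐ F I (X (Fin.castSucc i))) with hι
  have hψmk : ∀ a, ψ (Ideal.Quotient.mkₐ F I a) = φ a := fun a => by
    rw [hψ]; exact Ideal.Quotient.liftₐ_apply I φ hker _
  have hιkey : ι = (Ideal.Quotient.mkₐ F I).comp (rename (Fin.castSucc : Fin 2 → Fin 3)) := by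
    apply MvPolynomial.algHom_ext
    intro i
    simp [hι]
  have hmkX2 : Ideal.Quotient.mkₐ F I (rename Fin.castSucc g)
      = Ideal.Quotient.mkₐ F I (C c * X 2) := by
    have h0 : Ideal.Quotient.mkₐ F I t = 0 := by
      simp only [Ideal.Quotient.mkₐ_eq_mk, Ideal.Quotient.eq_zero_iff_mem, hI]
      exact Ideal.subset_span rfl
    rw [ht, map_sub, sub_eq_zero] at h0
    exact h0.symm
  have h1 : ψ.comp ι = AlgHom.id F (MvPolynomial (Fin 2) F) := by
    apply MvPolynomial.algHom_ext
    intro i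
    simp only [AlgHom.comp_apply, hι, aeval_X, AlgHom.id_apply, hψmk]
    rw [hφ]
    simp [Fin.snoc_castSucc]
  have h2' : ι.comp ψ = AlgHom.id F _ := by
    apply Ideal.Quotient.algHom_ext
    apply MvPolynomial.algHom_ext
    intro j
    simp only [AlgHom.comp_apply, AlgHom.id_apply, Ideal.Quotient.mkₐ_eq_mk]
    rw [← Ideal.Quotient.mkₐ_eq_mk F I, hψmk]
    induction j using Fin.lastCases with
    | last =>
      rw [hφ]
      simp only [← h2, aeval_X]
      rw [h2, Fin.snoc_last, map_smul]
      have hig : ι g = Ideal.Quotient.mkₐ F I (rename Fin.castSucc g) := by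
        have := congrArg (fun h => h g) (congrArg DFunLike.coe hιkey)
        simpa using this
      rw [hig, hmkX2, ← map_smul]
      congr 1
      rw [smul_eq_C_mul, ← mul_assoc, ← C_mul, inv_mul_cancel₀ hc, C_1, one_mul, h2]
    | cast i =>
      rw [hφ]
      simp only [aeval_X, Fin.snoc_castSucc]
      simp [hι]
  exact ⟨AlgEquiv.ofAlgHom ψ ι h1 h2'⟩

lemma lemB {κ : Type*} [Field κ] (g2 : MvPolynomial (Fin 2) κ)
    (e : (MvPolynomial (Fin 2) κ ⧸ Ideal.span {g2}) ≃ₐ[κ] Polynomial κ) :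
    Nonempty ((MvPolynomial (Fin 3) κ ⧸
        Ideal.span {(rename Fin.castSucc g2 : MvPolynomial (Fin 3) κ)})
      ≃ₐ[κ] MvPolynomial (Fin 2) κ) := by
  set E1 : MvPolynomial (Fin 3) κ ≃ₐ[κ] Polynomial (MvPolynomial (Fin 2) κ) :=
    (renameEquiv κ (finRotate 3)).trans (finSuccEquiv κ 2) with hE1def
  have hsucc : E1.toAlgHom.comp (rename (Fin.castSucc : Fin 2 → Fin 3)) =
      Polynomial.CAlgHom.comp (AlgHom.id κ (MvPolynomial (Fin 2) κ)) := by
    apply MvPolynomial.algHom_ext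
    intro i
    simp only [AlgHom.comp_apply, rename_X, AlgHom.id_apply, AlgEquiv.toAlgHom_eq_coe,
      AlgHom.coe_coe, hE1def, AlgEquiv.trans_apply, renameEquiv_apply, rename_X]
    rw [AlgEquiv.coe_algHom, AlgEquiv.trans_apply, renameEquiv_apply, rename_X]
    rw [show finRotate 3 (Fin.castSucc i) = i.succ by
      rw [finRotate_succ_apply, Fin.coeSucc_eq_succ]]
    rw [finSuccEquiv_X_succ]
    rfl
  have hE1 : E1 (rename Fin.castSucc g2) = Polynomial.C g2 := by
    have := congrArg (fun h => h g2) (congrArg DFunLike.coe hsucc)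
    simpa using this
  -- step 2 : quotient equiv
  have hmap : Ideal.span {(Polynomial.C g2 : Polynomial (MvPolynomial (Fin 2) κ))} =
      (Ideal.span {(rename Fin.castSucc g2 : MvPolynomial (Fin 3) κ)}).map (E1 : MvPolynomial (Fin 3) κ →+* _) := by
    rw [Ideal.map_span, Set.image_singleton]
    rw [show (E1 : MvPolynomial (Fin 3) κ →+* _) (rename Fin.castSucc g2) = Polynomial.C g2 from hE1]
  set E2 := Ideal.quotientEquivAlg (R₁ := κ)
    (Ideal.span {(rename Fin.castSucc g2 : MvPolynomial (Fin 3) κ)})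
    (Ideal.span {(Polynomial.C g2 : Polynomial (MvPolynomial (Fin 2) κ))}) E1 hmap
  -- step 3 : Polynomial quotient
  have hCmap : Ideal.span {(Polynomial.C g2 : Polynomial (MvPolynomial (Fin 2) κ))} =
      (Ideal.span {g2}).map (Polynomial.C : MvPolynomial (Fin 2) κ →+* _) := by
    rw [Ideal.map_span, Set.image_singleton]
  set E3' : (Polynomial (MvPolynomial (Fin 2) κ) ⧸
      Ideal.span {(Polynomial.C g2 : Polynomial (MvPolynomial (Fin 2) κ))}) ≃+*
      Polynomial (MvPolynomial (Fin 2) κ ⧸ Ideal.span {g2}) :=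
    (Ideal.quotEquivOfEq hCmap).trans
      (Ideal.polynomialQuotientEquivQuotientPolynomial (Ideal.span {g2})).symm with hE3'
  have hcomm3 : ∀ x : κ, E3' (@algebraMap κ _ _ _ (Ideal.instAlgebraQuotient κ
      (Ideal.span {(Polynomial.C g2 : Polynomial (MvPolynomial (Fin 2) κ))})) x) =
      algebraMap κ _ x := by
    intro x
    have h1 : (@algebraMap κ _ _ _ (Ideal.instAlgebraQuotient κ
        (Ideal.span {(Polynomial.C g2 : Polynomial (MvPolynomial (Fin 2) κ))})) x) =
        Ideal.Quotient.mk _ (Polynomial.C (MvPolynomial.C x)) := rfl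
    rw [h1, hE3', RingEquiv.trans_apply, Ideal.quotEquivOfEq_mk,
      Ideal.polynomialQuotientEquivQuotientPolynomial_symm_mk]
    rw [Polynomial.map_C]
    rfl
  set E3 : (Polynomial (MvPolynomial (Fin 2) κ) ⧸
      Ideal.span {(Polynomial.C g2 : Polynomial (MvPolynomial (Fin 2) κ))}) ≃ₐ[κ]
      Polynomial (MvPolynomial (Fin 2) κ ⧸ Ideal.span {g2}) :=
    AlgEquiv.ofRingEquiv hcomm3
  -- step 4/5
  set E4 := Polynomial.mapAlgEquiv e
  set E5 : Polynomial (Polynomial κ) ≃ₐ[κ] MvPolynomial (Fin 2) κ :=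
    ((finSuccEquiv κ 1).trans (Polynomial.mapAlgEquiv
      ((renameEquiv κ (Equiv.equivPUnit.{1,2} (Fin 1))).trans (pUnitAlgEquiv.{_,1} κ)))).symm
  exact ⟨E2.trans (E3.trans (E4.trans E5))⟩

lemma algk_bij {k : Type*} [Field k]
    (P : Ideal (Polynomial k)) [P.IsPrime]
    (κ : Type*) [Field κ] [Algebra (Polynomial k ⧸ P) κ]
    [IsFractionRing (Polynomial k ⧸ P) κ]
    [Algebra (Polynomial k) κ] [IsScalarTower (Polynomial k) (Polynomial k ⧸ P) κ]
    [Algebra k κ] [IsScalarTower k (Polynomial k) κ]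
    (m : ℕ) (hc : algebraMap (Polynomial k) κ (Polynomial.X ^ m) = 0) :
    Function.Bijective (algebraMap k κ) := by
  have hinj : Function.Injective (algebraMap k κ) := RingHom.injective _
  have hXP : Polynomial.X ∈ P := by
    have hfr : Function.Injective (algebraMap (Polynomial k ⧸ P) κ) :=
      IsFractionRing.injective _ _
    have h0 : algebraMap (Polynomial k ⧸ P) κ
        (algebraMap (Polynomial k) (Polynomial k ⧸ P) (Polynomial.X ^ m)) = 0 := by
      rw [← IsScalarTower.algebraMap_apply]; exact hc
    have h1 : algebraMap (Polynomial k) (Polynomial k ⧸ P) (Polynomial.X ^ m) = 0 :=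
      hfr (by rw [h0, map_zero])
    rw [Ideal.Quotient.algebraMap_eq, Ideal.Quotient.eq_zero_iff_mem] at h1
    exact (inferInstance : P.IsPrime).mem_of_pow_mem m h1
  have hQsurj : ∀ z : Polynomial k ⧸ P, ∃ x : k,
      Ideal.Quotient.mk P (Polynomial.C x) = z := by
    intro z
    obtain ⟨q, rfl⟩ := Ideal.Quotient.mk_surjective z
    refine ⟨q.coeff 0, ?_⟩
    rw [Ideal.Quotient.mk_eq_mk_iff_sub_mem]
    have hdvd : Polynomial.X ∣ (Polynomial.C (q.coeff 0) - q) := by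
      rw [Polynomial.X_dvd_iff]; simp
    obtain ⟨r, hr⟩ := hdvd
    rw [hr]
    exact Ideal.mul_mem_right _ _ hXP
  have key : ∀ x : k, algebraMap k κ x
      = algebraMap (Polynomial k ⧸ P) κ (Ideal.Quotient.mk P (Polynomial.C x)) := by
    intro x
    rw [IsScalarTower.algebraMap_apply k (Polynomial k) κ,
      IsScalarTower.algebraMap_apply (Polynomial k) (Polynomial k ⧸ P) κ,
      Polynomial.algebraMap_eq, Ideal.Quotient.algebraMap_eq]
  refine ⟨hinj, ?_⟩
  intro z
  obtain ⟨a, b, hb, hz⟩ := IsFractionRing.div_surjective (A := Polynomial k ⧸ P) z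
  obtain ⟨α, ha⟩ := hQsurj a
  obtain ⟨β, hβeq⟩ := hQsurj b
  have hβ : β ≠ 0 := by
    rintro rfl
    rw [map_zero, map_zero] at hβeq
    exact nonZeroDivisors.ne_zero hb hβeq.symm
  refine ⟨α / β, ?_⟩
  rw [map_div₀, key, key, ha, hβeq]
  exact hz


lemma eprime {k κ : Type*} [Field k] [Field κ] [Algebra k κ]
    (hbij : Function.Bijective (algebraMap k κ)) (f : MvPolynomial (Fin 2) k)
    (e : (MvPolynomial (Fin 2) k ⧸ Ideal.span {f}) ≃ₐ[k] Polynomial k) :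
    Nonempty ((MvPolynomial (Fin 2) κ ⧸
        Ideal.span {MvPolynomial.map (algebraMap k κ) f}) ≃ₐ[κ] Polynomial κ) := by
  set ε : k ≃+* κ := RingEquiv.ofBijective (algebraMap k κ) hbij with hε
  have hεapp : ∀ x : k, ε x = algebraMap k κ x := fun _ => rfl
  have hIJ : Ideal.span {f} = (Ideal.span {MvPolynomial.map (algebraMap k κ) f}).map
      ((mapEquiv (Fin 2) ε.symm : MvPolynomial (Fin 2) κ ≃+* MvPolynomial (Fin 2) k) :
        MvPolynomial (Fin 2) κ →+* MvPolynomial (Fin 2) k) := by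
    rw [Ideal.map_span, Set.image_singleton]
    show Ideal.span {f} = Ideal.span
      {MvPolynomial.map (ε.symm : κ →+* k) (MvPolynomial.map (algebraMap k κ) f)}
    rw [map_map]
    have : (ε.symm : κ →+* k).comp (algebraMap k κ) = RingHom.id k := by
      ext x
      simp only [RingHom.comp_apply, RingHom.id_apply]
      exact ε.symm_apply_apply x
    rw [this, map_id]
  set E := (Ideal.quotientEquiv _ _ (mapEquiv (Fin 2) ε.symm) hIJ).trans
    (e.toRingEquiv.trans (Polynomial.mapEquiv ε)) with hE
  have hcomm : ∀ x : κ, E (algebraMap κ _ x) = algebraMap κ (Polynomial κ) x := by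
    intro x
    have h1 : algebraMap κ (MvPolynomial (Fin 2) κ ⧸
        Ideal.span {MvPolynomial.map (algebraMap k κ) f}) x
        = Ideal.Quotient.mk _ (C x) := rfl
    rw [h1, hE, RingEquiv.trans_apply, Ideal.quotientEquiv_mk, RingEquiv.trans_apply]
    have h2 : (mapEquiv (Fin 2) ε.symm) (C x) = C ((ε.symm : κ →+* k) x) := by
      show MvPolynomial.map (ε.symm : κ →+* k) (C x) = C ((ε.symm : κ →+* k) x)
      rw [map_C]
    rw [h2]
    have h3 : (Ideal.Quotient.mk (Ideal.span {f})) (C ((ε.symm : κ →+* k) x))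
        = algebraMap k (MvPolynomial (Fin 2) k ⧸ Ideal.span {f}) ((ε.symm : κ →+* k) x) := rfl
    rw [h3]
    have h4 : e.toRingEquiv (algebraMap k _ ((ε.symm : κ →+* k) x))
        = Polynomial.C ((ε.symm : κ →+* k) x) := by
      show e (algebraMap k _ ((ε.symm : κ →+* k) x)) = _
      rw [e.commutes, Polynomial.algebraMap_eq]
    rw [h4]
    show Polynomial.map (ε : k →+* κ) (Polynomial.C ((ε.symm : κ →+* k) x)) = _
    rw [Polynomial.map_C, Polynomial.algebraMap_eq]
    congr 1
    exact ε.apply_symm_apply x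
  exact ⟨AlgEquiv.ofRingEquiv hcomm⟩

/-- Asanuma/Gupta example: for `R = k[π]`, `char k = p > 0`, and
`A = R[X,Y,Z]/(πᵐZ - f(X,Y))` with `k[X,Y]/(f) ≅ k[1]` but
`k[X,Y] ≠ k[f][1]`, every fibre `A ⊗_R k(P)` — which is the quotient of
`k(P)[X,Y,Z]` by the base-changed relation `πᵐZ - f(X,Y)` — is a polynomial
ring in two variables over the residue field `k(P) = Frac(R/P)`. -/
theorem stmt_9 {k : Type*} [Field k] (p : ℕ) (hp : p.Prime) (hchar : ringChar k = p)
    (m : ℕ) (hm : 0 < m) (f : MvPolynomial (Fin 2) k)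
    (hf1 : Nonempty ((MvPolynomial (Fin 2) k ⧸ Ideal.span {f}) ≃ₐ[k] Polynomial k))
    (hf2 : ¬ ∃ g : MvPolynomial (Fin 2) k,
      AlgebraicIndependent k ![f, g] ∧ Algebra.adjoin k {f, g} = ⊤)
    (P : Ideal (Polynomial k)) [P.IsPrime]
    -- `κ` is the residue field `k(P) = Frac(R/P)` of `R = k[π]` at `P`
    (κ : Type*) [Field κ] [Algebra (Polynomial k ⧸ P) κ]
    [IsFractionRing (Polynomial k ⧸ P) κ]
    [Algebra (Polynomial k) κ] [IsScalarTower (Polynomial k) (Polynomial k ⧸ P) κ]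
    [Algebra k κ] [IsScalarTower k (Polynomial k) κ] :
    Nonempty (
      (MvPolynomial (Fin 3) κ ⧸
        Ideal.span {(C (algebraMap (Polynomial k) κ (Polynomial.X ^ m)) * X 2 -
            MvPolynomial.map (algebraMap k κ)
              (MvPolynomial.rename Fin.castSucc f) :
            MvPolynomial (Fin 3) κ)})
      ≃ₐ[κ] MvPolynomial (Fin 2) κ) := by
  obtain ⟨e⟩ := hf1
  have hmr : (MvPolynomial.map (algebraMap k κ) (rename Fin.castSucc f) :
      MvPolynomial (Fin 3) κ)
      = rename Fin.castSucc (MvPolynomial.map (algebraMap k κ) f) :=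
    map_rename _ _ _
  rw [hmr]
  by_cases hc : algebraMap (Polynomial k) κ (Polynomial.X ^ m) = 0
  · rw [hc, C_0, zero_mul, zero_sub, Ideal.span_singleton_neg]
    have hbij := algk_bij P κ m hc
    obtain ⟨e'⟩ := eprime hbij f e
    exact lemB _ e'
  · exact lemA _ hc _
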